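/- For any coupling M of probability distributions p and q (i.e., an n×m nonnegative matrix whose row sums are p and column sums are q), the vector of entries of M, sorted non-increasingly, is majorized by the greatest lower bound p ∧ q in the majorization lattice. -/
import Mathlib


open Finset

/-- Majorization via prefix sums (vectors as functions ℕ → ℝ, padded with zeros). -/
def Maj (p q : ℕ → ℝ) : Prop :=
  ∀ i : ℕ, ∑ k ∈ Finset.range i, p k ≤ ∑ k ∈ Finset.range i, q k

/-- A probability vector of length `n`, sorted non-increasingly, zero beyond `n`. -/
def IsProbVec (n : ℕ) (p : ℕ → ℝ) : Prop :=
  (∀ i, 0 ≤ p i) ∧ (∀ i j : ℕ, i ≤ j → p j ≤ p i) ∧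
  (∑ k ∈ Finset.range n, p k = 1) ∧ (∀ i, n ≤ i → p i = 0)

/-- The greatest lower bound `p ∧ q` in the majorization lattice. -/
noncomputable def meet (p q : ℕ → ℝ) : ℕ → ℝ := fun i =>
  min (∑ k ∈ Finset.range (i + 1), p k) (∑ k ∈ Finset.range (i + 1), q k) -
  min (∑ k ∈ Finset.range i, p k) (∑ k ∈ Finset.range i, q k)

/-- Shannon entropy (base 2) of the first `n` components. -/
noncomputable def H2 (n : ℕ) (p : ℕ → ℝ) : ℝ :=
  ∑ k ∈ Finset.range n, -(p k * Real.logb 2 (p k))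

/-- Shannon entropy (base 2) of the entries of an `n × m` matrix. -/
noncomputable def Hmat (n m : ℕ) (M : ℕ → ℕ → ℝ) : ℝ :=
  ∑ i ∈ Finset.range n, ∑ j ∈ Finset.range m, -(M i j * Real.logb 2 (M i j))

/-- `M` is a coupling of `p` and `q`: nonnegative, row sums `p`, column sums `q`. -/
def IsCoupling (n m : ℕ) (p q : ℕ → ℝ) (M : ℕ → ℕ → ℝ) : Prop :=
  (∀ i j, 0 ≤ M i j) ∧ (∀ i < n, ∑ j ∈ Finset.range m, M i j = p i) ∧
  (∀ j < m, ∑ i ∈ Finset.range n, M i j = q j)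

/-- The `half` operator: duplicates and halves each component. -/
noncomputable def half (p : ℕ → ℝ) : ℕ → ℝ := fun i => p (i / 2) / 2

/-- Iterated `half` operator. -/
noncomputable def halfIter : ℕ → (ℕ → ℝ) → (ℕ → ℝ)
  | 0, p => p
  | (i + 1), p => half (halfIter i p)

/-- Iterated majorization meet of `p 0, p 1, …, p k`. -/
noncomputable def bigMeet (p : ℕ → ℕ → ℝ) : ℕ → (ℕ → ℝ)
  | 0 => p 0
  | (k + 1) => meet (bigMeet p k) (p (k + 1))


lemma aux_sum (p : ℕ → ℝ) (hmono : ∀ i j : ℕ, i ≤ j → p j ≤ p i) :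
    ∀ T : Finset ℕ, ∑ i ∈ T, p i ≤ ∑ k ∈ Finset.range T.card, p k := by
  intro T
  induction T using Finset.strongInduction with
  | _ T ih =>
    rcases T.eq_empty_or_nonempty with rfl | hT
    · simp
    · set a := T.max' hT with ha
      have haT : a ∈ T := T.max'_mem hT
      have hsub : T ⊆ Finset.range (a + 1) := by
        intro x hx
        exact Finset.mem_range.mpr (Nat.lt_succ_of_le (T.le_max' x hx))
      have hcard : T.card ≤ a + 1 := by
        simpa using Finset.card_le_card hsub
      have hc : (T.erase a).card = T.card - 1 := Finset.card_erase_of_mem haT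
      have hpos : 1 ≤ T.card := Finset.card_pos.mpr hT
      have h1 : ∑ i ∈ T, p i = ∑ i ∈ T.erase a, p i + p a := by
        rw [Finset.sum_erase_add _ _ haT]
      have h2 := ih (T.erase a) (Finset.erase_ssubset haT)
      have h3 : p a ≤ p (T.card - 1) := hmono _ _ (by omega)
      have h4 : ∑ k ∈ Finset.range T.card, p k
          = ∑ k ∈ Finset.range (T.card - 1), p k + p (T.card - 1) := by
        have : T.card = (T.card - 1) + 1 := by omega
        rw [this, Finset.sum_range_succ]
        simp
      rw [hc] at h2; rw [h1, h4]
      exact add_le_add h2 h3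

lemma sum_meet (p q : ℕ → ℝ) (c : ℕ) :
    ∑ k ∈ Finset.range c, meet p q k
      = min (∑ k ∈ Finset.range c, p k) (∑ k ∈ Finset.range c, q k) := by
  have := Finset.sum_range_sub
    (fun i => min (∑ k ∈ Finset.range i, p k) (∑ k ∈ Finset.range i, q k)) c
  simpa [meet] using this

theorem stmt1 (n m : ℕ) (p q : ℕ → ℝ) (hp : IsProbVec n p) (hq : IsProbVec m q)
    (M : ℕ → ℕ → ℝ) (hM : IsCoupling n m p q M) :
    ∀ S : Finset (ℕ × ℕ), S ⊆ Finset.range n ×ˢ Finset.range m →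
      ∑ ij ∈ S, M ij.1 ij.2 ≤ ∑ k ∈ Finset.range S.card, meet p q k := by
  intro S hS
  obtain ⟨hMnn, hrow, hcol⟩ := hM
  rw [sum_meet]
  have hle : ∀ (c : ℕ) (T : Finset ℕ), T.card ≤ c →
      ∀ r : ℕ → ℝ, (∀ i, 0 ≤ r i) → (∀ i j : ℕ, i ≤ j → r j ≤ r i) →
      ∑ i ∈ T, r i ≤ ∑ k ∈ Finset.range c, r k := by
    intro c T hTc r hnn hmono
    calc ∑ i ∈ T, r i ≤ ∑ k ∈ Finset.range T.card, r k := aux_sum r hmono T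
      _ ≤ ∑ k ∈ Finset.range c, r k :=
        Finset.sum_le_sum_of_subset_of_nonneg
          (Finset.range_subset_range.mpr hTc) (fun i _ _ => hnn i)
  apply le_min
  · set R := S.image Prod.fst with hR
    have hSsub : S ⊆ R ×ˢ Finset.range m := by
      intro x hx
      refine Finset.mem_product.mpr ⟨Finset.mem_image_of_mem _ hx, ?_⟩
      exact (Finset.mem_product.mp (hS hx)).2
    calc ∑ ij ∈ S, M ij.1 ij.2
        ≤ ∑ ij ∈ R ×ˢ Finset.range m, M ij.1 ij.2 :=
          Finset.sum_le_sum_of_subset_of_nonneg hSsub (fun ij _ _ => hMnn _ _)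
      _ = ∑ i ∈ R, ∑ j ∈ Finset.range m, M i j := by rw [Finset.sum_product]
      _ = ∑ i ∈ R, p i := by
          apply Finset.sum_congr rfl
          intro i hi
          obtain ⟨ij, hij, rfl⟩ := Finset.mem_image.mp hi
          exact hrow _ (Finset.mem_range.mp (Finset.mem_product.mp (hS hij)).1)
      _ ≤ ∑ k ∈ Finset.range S.card, p k :=
          hle S.card R (Finset.card_image_le) p hp.1 hp.2.1
  · set R := S.image Prod.snd with hR
    have hSsub : S ⊆ Finset.range n ×ˢ R := by
      intro x hx
      refine Finset.mem_product.mpr ⟨(Finset.mem_product.mp (hS hx)).1,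
        Finset.mem_image_of_mem _ hx⟩
    calc ∑ ij ∈ S, M ij.1 ij.2
        ≤ ∑ ij ∈ Finset.range n ×ˢ R, M ij.1 ij.2 :=
          Finset.sum_le_sum_of_subset_of_nonneg hSsub (fun ij _ _ => hMnn _ _)
      _ = ∑ j ∈ R, ∑ i ∈ Finset.range n, M i j := by
          rw [Finset.sum_product_right]
      _ = ∑ j ∈ R, q j := by
          apply Finset.sum_congr rfl
          intro j hj
          obtain ⟨ij, hij, rfl⟩ := Finset.mem_image.mp hj
          exact hcol _ (Finset.mem_range.mp (Finset.mem_product.mp (hS hij)).2)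
      _ ≤ ∑ k ∈ Finset.range S.card, q k :=
          hle S.card R (Finset.card_image_le) q hq.1 hq.2.1
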